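/- arXiv:1807.10801 — 2 statements merged into one kernel-verified Lean document; each statement's English description precedes it below -/
import Mathlib

section
/- If a random variable p₁ has distribution function F with F'(p) ≥ d > 0 on an interval (α, α+γ), and a function h : (0,1) → ℝ satisfies h(p) ≥ C / d(p,α) on (α, α+γ) where d(p,α) is the Bernoulli KL divergence and C > 0, then E[h(p₁)] = ∫₀¹ h(p) dF(p) = ∞. -/
open Real MeasureTheory

noncomputable def bernoulliKL (p α : ℝ) : ℝ :=
  p * Real.log (p / α) + (1 - p) * Real.log ((1 - p) / (1 - α))

lemma KL_pos {p α : ℝ} (hα : 0 < α) (hp1 : p < 1) (hpα : α < p) :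
    0 < bernoulliKL p α := by
  have hp : 0 < p := hα.trans hpα
  have h1p : 0 < 1 - p := by linarith
  have h1α : 0 < 1 - α := by linarith
  have ht : (1:ℝ) < p / α := (one_lt_div hα).2 hpα
  have h1 : 1 - α / p < Real.log (p / α) := by
    have := Real.log_lt_sub_one_of_pos (x := α / p) (by positivity)
      (ne_of_lt ((div_lt_one hp).2 hpα))
    have hlog : Real.log (α / p) = - Real.log (p / α) := by
      rw [← Real.log_inv]; congr 1; field_simp
    rw [hlog] at this; linarith
  have h2 : 1 - (1 - α) / (1 - p) ≤ Real.log ((1 - p) / (1 - α)) := by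
    have := Real.log_le_sub_one_of_pos (x := (1 - α) / (1 - p)) (by positivity)
    have hlog : Real.log ((1 - α) / (1 - p)) = - Real.log ((1 - p) / (1 - α)) := by
      rw [← Real.log_inv]; congr 1; field_simp
    rw [hlog] at this; linarith
  have e1 : p * (1 - α / p) = p - α := by field_simp
  have e2 : (1 - p) * (1 - (1 - α) / (1 - p)) = α - p := by field_simp; ring
  have b1 : p - α < p * Real.log (p / α) := by
    rw [← e1]; exact (mul_lt_mul_iff_right₀ hp).2 h1
  have b2 : α - p ≤ (1 - p) * Real.log ((1 - p) / (1 - α)) := by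
    rw [← e2]; exact (mul_le_mul_iff_right₀ h1p).2 h2
  unfold bernoulliKL; linarith

lemma KL_le {p α : ℝ} (hα : 0 < α) (hp1 : p < 1) (hpα : α < p) :
    bernoulliKL p α ≤ (p - α) ^ 2 / (α * (1 - α)) := by
  have hp : 0 < p := hα.trans hpα
  have h1p : 0 < 1 - p := by linarith
  have h1α : 0 < 1 - α := by linarith
  have h1 : Real.log (p / α) ≤ p / α - 1 := Real.log_le_sub_one_of_pos (by positivity)
  have h2 : Real.log ((1 - p) / (1 - α)) ≤ (1 - p) / (1 - α) - 1 :=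
    Real.log_le_sub_one_of_pos (by positivity)
  have b1 : p * Real.log (p / α) ≤ p * (p / α - 1) := by
    exact mul_le_mul_of_nonneg_left h1 hp.le
  have b2 : (1 - p) * Real.log ((1 - p) / (1 - α)) ≤ (1 - p) * ((1 - p) / (1 - α) - 1) :=
    mul_le_mul_of_nonneg_left h2 h1p.le
  have key : p * (p / α - 1) + (1 - p) * ((1 - p) / (1 - α) - 1)
      = (p - α) ^ 2 / (α * (1 - α)) := by
    field_simp; ring
  unfold bernoulliKL; linarith

lemma lintegral_inv_sq_top {α γ : ℝ} (hγ : 0 < γ) {K : ℝ} (hK : 0 < K) :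
    ∫⁻ p in Set.Ioo α (α + γ), ENNReal.ofReal (K / (p - α) ^ 2) ∂volume = ⊤ := by
  by_contra hne
  have hmeas : AEStronglyMeasurable (fun p => K / (p - α) ^ 2)
      (volume.restrict (Set.Ioo α (α + γ))) :=
    (measurable_const.div (((measurable_id.sub_const α).pow_const 2))).aestronglyMeasurable
  have hpos : 0 ≤ᵐ[volume.restrict (Set.Ioo α (α + γ))] fun p => K / (p - α) ^ 2 :=
    ae_of_all _ fun p => div_nonneg hK.le (sq_nonneg _)
  have hint : IntegrableOn (fun p => K / (p - α) ^ 2) (Set.Ioo α (α + γ)) volume :=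
    (lintegral_ofReal_ne_top_iff_integrable hmeas hpos).1 hne
  have hint2 : IntegrableOn (fun p => (p - α) ^ (-2 : ℝ)) (Set.Ioo α (α + γ)) volume := by
    have h3 : IntegrableOn (fun p => K⁻¹ * (K / (p - α) ^ 2)) (Set.Ioo α (α + γ)) volume :=
      hint.const_mul K⁻¹
    refine (h3.congr_fun ?_ measurableSet_Ioo)
    intro p hp
    have hpα : 0 < p - α := sub_pos.2 hp.1
    have heq : (p - α) ^ (-2 : ℝ) = ((p - α) ^ 2)⁻¹ := by
      rw [show (-2 : ℝ) = -(2:ℕ) by norm_num, Real.rpow_neg hpα.le, Real.rpow_natCast]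
    show K⁻¹ * (K / (p - α) ^ 2) = (p - α) ^ (-2 : ℝ)
    rw [heq]
    field_simp
  have hII : IntervalIntegrable (fun p => (p - α) ^ (-2 : ℝ)) volume α (α + γ) :=
    (intervalIntegrable_iff_integrableOn_Ioo_of_le (by linarith)).2 hint2
  have hII2 : IntervalIntegrable (fun x : ℝ => x ^ (-2 : ℝ)) volume 0 γ := by
    have := hII.comp_add_right α
    simpa using this
  have hint3 : IntegrableOn (fun x : ℝ => x ^ (-2 : ℝ)) (Set.Ioo 0 γ) volume :=
    (intervalIntegrable_iff_integrableOn_Ioo_of_le hγ.le).1 hII2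
  have := (intervalIntegral.integrableOn_Ioo_rpow_iff hγ).1 hint3
  norm_num at this

theorem stmt2 (α γ d C : ℝ) (hα : 0 < α) (hγ : 0 < γ) (hαγ : α + γ < 1)
    (hd : 0 < d) (hC : 0 < C)
    (f : ℝ → ℝ) (hf : ∀ p ∈ Set.Ioo α (α + γ), d ≤ f p)
    (μ : Measure ℝ) [IsProbabilityMeasure μ]
    (hμ : μ = (volume.restrict (Set.Icc (0:ℝ) 1)).withDensity
      (fun p => ENNReal.ofReal (f p)))
    (h : ℝ → ℝ) (hh : ∀ p, 0 ≤ h p)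
    (hhC : ∀ p ∈ Set.Ioo α (α + γ), C / bernoulliKL p α ≤ h p) :
    ∫⁻ p, ENNReal.ofReal (h p) ∂μ = ⊤ := by
  set I := Set.Ioo α (α + γ) with hIdef
  have hImeas : MeasurableSet I := measurableSet_Ioo
  have hIsub : I ⊆ Set.Icc (0:ℝ) 1 := fun p hp =>
    ⟨by have := hp.1; linarith, by have := hp.2; linarith⟩
  set ν : Measure ℝ := (ENNReal.ofReal d) • (volume.restrict I) with hνdef
  have hνμ : ν ≤ μ := by
    rw [hμ, Measure.le_iff]
    intro s hs
    rw [withDensity_apply _ hs]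
    have step1 : ν s = ENNReal.ofReal d * volume (s ∩ I) := by
      simp [hνdef, Measure.restrict_apply hs]
    have hsI : MeasurableSet (s ∩ I) := hs.inter hImeas
    have step2 : ENNReal.ofReal d * volume (s ∩ I)
        = ∫⁻ p in s ∩ I, ENNReal.ofReal d ∂(volume.restrict (Set.Icc (0:ℝ) 1)) := by
      rw [setLIntegral_const, Measure.restrict_apply hsI,
        Set.inter_eq_self_of_subset_left (Set.inter_subset_right.trans hIsub), mul_comm]
    have step3 : ∫⁻ p in s ∩ I, ENNReal.ofReal d ∂(volume.restrict (Set.Icc (0:ℝ) 1))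
        ≤ ∫⁻ p in s ∩ I, ENNReal.ofReal (f p) ∂(volume.restrict (Set.Icc (0:ℝ) 1)) := by
      refine lintegral_mono_ae ?_
      filter_upwards [ae_restrict_mem hsI] with p hp
      exact ENNReal.ofReal_le_ofReal (hf p hp.2)
    have step4 : ∫⁻ p in s ∩ I, ENNReal.ofReal (f p) ∂(volume.restrict (Set.Icc (0:ℝ) 1))
        ≤ ∫⁻ p in s, ENNReal.ofReal (f p) ∂(volume.restrict (Set.Icc (0:ℝ) 1)) :=
      lintegral_mono_set Set.inter_subset_left
    calc ν s = ENNReal.ofReal d * volume (s ∩ I) := step1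
      _ ≤ _ := by rw [step2]; exact step3.trans step4
  set g : ℝ → ENNReal := I.indicator (fun p => ENNReal.ofReal (C / bernoulliKL p α)) with hgdef
  have hg_le : ∀ p, g p ≤ ENNReal.ofReal (h p) := by
    intro p
    by_cases hp : p ∈ I
    · rw [hgdef, Set.indicator_of_mem hp]
      exact ENNReal.ofReal_le_ofReal (hhC p hp)
    · rw [hgdef, Set.indicator_of_notMem hp]; exact zero_le
  have key : ∫⁻ p, g p ∂ν = ⊤ := by
    rw [hνdef, lintegral_smul_measure, hgdef, lintegral_indicator hImeas _,
      Measure.restrict_restrict hImeas, Set.inter_self]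
    have main : ∫⁻ p in I, ENNReal.ofReal (C / bernoulliKL p α) ∂volume = ⊤ := by
      set K := C * (α * (1 - α)) with hKdef
      have hK : 0 < K := by
        have : 0 < 1 - α := by linarith
        positivity
      have hlow : ∀ p ∈ I, ENNReal.ofReal (K / (p - α) ^ 2)
          ≤ ENNReal.ofReal (C / bernoulliKL p α) := by
        intro p hp
        have hp1 : p < 1 := lt_of_lt_of_le hp.2 hαγ.le
        have hKLpos := KL_pos hα hp1 hp.1
        have hKLle := KL_le hα hp1 hp.1
        refine ENNReal.ofReal_le_ofReal ?_
        have h1 : C / ((p - α) ^ 2 / (α * (1 - α))) ≤ C / bernoulliKL p α :=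
          div_le_div_of_nonneg_left hC.le hKLpos hKLle
        have h2 : C / ((p - α) ^ 2 / (α * (1 - α))) = K / (p - α) ^ 2 := by
          rw [hKdef, div_div_eq_mul_div]
        linarith [h1, h2 ▸ h1]
      have hbelow : ∫⁻ p in I, ENNReal.ofReal (K / (p - α) ^ 2) ∂volume
          ≤ ∫⁻ p in I, ENNReal.ofReal (C / bernoulliKL p α) ∂volume := by
        refine lintegral_mono_ae ?_
        filter_upwards [ae_restrict_mem hImeas] with p hp using hlow p hp
      have := lintegral_inv_sq_top (α := α) hγ hK
      rw [← hIdef] at this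
      exact top_le_iff.1 (this ▸ hbelow)
    rw [main]
    rw [smul_eq_mul, ENNReal.mul_top]
    simp [hd, ENNReal.ofReal_eq_zero, not_le]
  have : ∫⁻ p, g p ∂ν ≤ ∫⁻ p, ENNReal.ofReal (h p) ∂μ :=
    lintegral_mono' hνμ hg_le
  rw [key] at this
  exact top_le_iff.1 this
end

section
/- The two-sided Clopper–Pearson confidence interval with coverage probability 1 − ρₙ based on n Monte Carlo simulations has length at most 2·(2n)^{−1/2}·(−log ρₙ)^{1/2}. -/
open Real

/-- P(X ≤ S) for X ~ Binomial(n,p). -/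
noncomputable def binomCdf (n : ℕ) (p : ℝ) (S : ℕ) : ℝ :=
  ∑ k ∈ Finset.range (S + 1), (n.choose k : ℝ) * p ^ k * (1 - p) ^ (n - k)


lemma hoeff_lemma (p : ℝ) (hp0 : 0 ≤ p) (hp1 : p ≤ 1) (t : ℝ) :
    1 - p + p * Real.exp t ≤ Real.exp (p * t + t ^ 2 / 8) := by
  set u : ℝ → ℝ := fun t => 1 - p + p * Real.exp t with hu_def
  have hu : ∀ x, 0 < u x := by
    intro x
    have hux : u x = 1 - p + p * Real.exp x := rfl
    rw [hux]
    have he := Real.exp_pos x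
    rcases lt_or_ge (Real.exp x) 1 with h | h
    · nlinarith [mul_nonneg (sub_nonneg.2 hp1) (sub_nonneg.2 h.le)]
    · nlinarith [mul_nonneg hp0 (sub_nonneg.2 h)]
  set g1 : ℝ → ℝ := fun t => p + t / 4 - p * Real.exp t / u t with hg1_def
  set g : ℝ → ℝ := fun t => p * t + t ^ 2 / 8 - Real.log (u t) with hg_def
  have hderiv_u : ∀ x, HasDerivAt u (p * Real.exp x) x := by
    intro x
    exact ((Real.hasDerivAt_exp x).const_mul p).const_add (1 - p)
  have hderiv_g : ∀ x, HasDerivAt g (g1 x) x := by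
    intro x
    have h1 : HasDerivAt (fun t : ℝ => p * t + t ^ 2 / 8) (p + 2 * x / 8) x := by
      have h0 : HasDerivAt (fun t : ℝ => t ^ 2 / 8) (2 * x / 8) x := by
        simpa using (hasDerivAt_pow 2 x).div_const 8
      exact (((hasDerivAt_id x).const_mul p).add h0).congr_deriv (by simp)
    have h2 : HasDerivAt (fun t => Real.log (u t)) (p * Real.exp x / u x) x :=
      (hderiv_u x).log (hu x).ne'
    have := h1.sub h2
    refine this.congr_deriv ?_
    simp only [hg1_def]
    ring
  have hderiv_g1 : ∀ x, HasDerivAt g1 (1 / 4 - p * (1 - p) * Real.exp x / (u x) ^ 2) x := by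
    intro x
    have hq : HasDerivAt (fun t => p * Real.exp t / u t)
        ((p * Real.exp x * u x - p * Real.exp x * (p * Real.exp x)) / (u x) ^ 2) x :=
      ((Real.hasDerivAt_exp x).const_mul p).div (hderiv_u x) (hu x).ne'
    have h1 : HasDerivAt (fun t : ℝ => p + t / 4) (1 / 4) x := by
      simpa using ((hasDerivAt_id x).div_const 4).const_add p
    have := h1.sub hq
    refine this.congr_deriv ?_
    have hux : u x = 1 - p + p * Real.exp x := rfl
    rw [hux]
    have hx2 : (0:ℝ) < 1 - p + p * Real.exp x := by rw [← hux]; exact hu x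
    field_simp
    ring
  have hg1mono : Monotone g1 := by
    apply monotone_of_deriv_nonneg (fun x => (hderiv_g1 x).differentiableAt)
    intro x
    rw [(hderiv_g1 x).deriv]
    have hux : u x = 1 - p + p * Real.exp x := rfl
    have hu2 : (0:ℝ) < (u x) ^ 2 := pow_pos (hu x) 2
    rw [sub_nonneg, div_le_iff₀ hu2, hux]
    nlinarith [sq_nonneg ((1 - p) - p * Real.exp x)]
  have hg1zero : g1 0 = 0 := by
    have : u 0 = 1 := by simp [hu_def]
    simp [hg1_def, this]
  have hg0 : g 0 = 0 := by
    have : u 0 = 1 := by simp [hu_def]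
    simp [hg_def, this]
  have hgdiff : Differentiable ℝ g := fun x => (hderiv_g x).differentiableAt
  have hgkey : ∀ x : ℝ, 0 ≤ g x := by
    intro x
    rcases le_or_gt 0 x with hx | hx
    · have hmono : MonotoneOn g (Set.Ici 0) := by
        apply monotoneOn_of_deriv_nonneg (convex_Ici 0) hgdiff.continuous.continuousOn
          hgdiff.differentiableOn
        intro y hy
        rw [(hderiv_g y).deriv]
        rw [interior_Ici] at hy
        have := hg1mono (le_of_lt hy)
        rw [hg1zero] at this
        exact this
      have := hmono (Set.self_mem_Ici) (Set.mem_Ici.2 hx) hx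
      rw [hg0] at this; exact this
    · have hanti : AntitoneOn g (Set.Iic 0) := by
        apply antitoneOn_of_deriv_nonpos (convex_Iic 0) hgdiff.continuous.continuousOn
          hgdiff.differentiableOn
        intro y hy
        rw [(hderiv_g y).deriv]
        rw [interior_Iic] at hy
        have := hg1mono (le_of_lt hy)
        rw [hg1zero] at this
        exact this
      have := hanti (Set.mem_Iic.2 hx.le) (Set.self_mem_Iic) hx.le
      rw [hg0] at this; exact this
  have := hgkey t
  have hlog : Real.log (u t) ≤ p * t + t ^ 2 / 8 := by
    simp only [hg_def] at this; linarith
  calc 1 - p + p * Real.exp t = u t := rfl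
    _ = Real.exp (Real.log (u t)) := (Real.exp_log (hu t)).symm
    _ ≤ Real.exp (p * t + t ^ 2 / 8) := Real.exp_le_exp.2 hlog


lemma binom_sum_eq (n : ℕ) (x y : ℝ) :
    ∑ k ∈ Finset.range (n + 1), (n.choose k : ℝ) * x ^ k * y ^ (n - k) = (x + y) ^ n := by
  rw [add_pow]
  exact Finset.sum_congr rfl fun k _ => by ring

lemma cdf_le (n S : ℕ) (hSn : S ≤ n) (p : ℝ) (hp0 : 0 ≤ p) (hp1 : p ≤ 1)
    (s : ℝ) (hs : 0 ≤ s) :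
    binomCdf n p S ≤ Real.exp (s * S - n * s * p + n * s ^ 2 / 8) := by
  have hq : (0:ℝ) ≤ 1 - p := by linarith
  have step1 : binomCdf n p S ≤ Real.exp (s * S) *
      ∑ k ∈ Finset.range (n + 1), (n.choose k : ℝ) * (p * Real.exp (-s)) ^ k * (1 - p) ^ (n - k) := by
    rw [Finset.mul_sum]
    calc binomCdf n p S
        ≤ ∑ k ∈ Finset.range (S + 1),
            Real.exp (s * S) * ((n.choose k : ℝ) * (p * Real.exp (-s)) ^ k * (1 - p) ^ (n - k)) := by
          apply Finset.sum_le_sum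
          intro k hk
          have hkS : k ≤ S := Nat.lt_succ_iff.mp (Finset.mem_range.mp hk)
          have hterm : (0:ℝ) ≤ (n.choose k : ℝ) * p ^ k * (1 - p) ^ (n - k) := by positivity
          have hrw : Real.exp (s * S) * ((n.choose k : ℝ) * (p * Real.exp (-s)) ^ k * (1 - p) ^ (n - k))
              = Real.exp (s * S + k * (-s)) * ((n.choose k : ℝ) * p ^ k * (1 - p) ^ (n - k)) := by
            rw [mul_pow, ← Real.exp_nat_mul, Real.exp_add]
            ring
          rw [hrw]
          have h1 : (1:ℝ) ≤ Real.exp (s * S + k * (-s)) := by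
            apply Real.one_le_exp
            have : (k:ℝ) ≤ S := by exact_mod_cast hkS
            nlinarith
          nlinarith [mul_le_mul_of_nonneg_right h1 hterm]
      _ ≤ ∑ k ∈ Finset.range (n + 1),
            Real.exp (s * S) * ((n.choose k : ℝ) * (p * Real.exp (-s)) ^ k * (1 - p) ^ (n - k)) := by
          apply Finset.sum_le_sum_of_subset_of_nonneg
          · exact Finset.range_subset_range.2 (by omega)
          · intro k _ _
            positivity
  have step2 : ∑ k ∈ Finset.range (n + 1), (n.choose k : ℝ) * (p * Real.exp (-s)) ^ k * (1 - p) ^ (n - k)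
      = (p * Real.exp (-s) + (1 - p)) ^ n := binom_sum_eq n _ _
  have step3 : (p * Real.exp (-s) + (1 - p)) ^ n ≤ Real.exp (p * (-s) + s ^ 2 / 8) ^ n := by
    apply pow_le_pow_left₀ (by positivity)
    have := hoeff_lemma p hp0 hp1 (-s)
    calc p * Real.exp (-s) + (1 - p) = 1 - p + p * Real.exp (-s) := by ring
      _ ≤ Real.exp (p * (-s) + (-s) ^ 2 / 8) := this
      _ = Real.exp (p * (-s) + s ^ 2 / 8) := by ring_nf
  calc binomCdf n p S ≤ Real.exp (s * S) * (p * Real.exp (-s) + (1 - p)) ^ n := by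
        rw [← step2]; exact step1
    _ ≤ Real.exp (s * S) * Real.exp (p * (-s) + s ^ 2 / 8) ^ n := by
        apply mul_le_mul_of_nonneg_left step3 (Real.exp_pos _).le
    _ = Real.exp (s * S - n * s * p + n * s ^ 2 / 8) := by
        rw [← Real.exp_nat_mul, ← Real.exp_add]
        congr 1
        ring

lemma tail_le (n S : ℕ) (hS1 : 1 ≤ S) (hSn : S ≤ n) (p : ℝ) (hp0 : 0 ≤ p) (hp1 : p ≤ 1)
    (t : ℝ) (ht : 0 ≤ t) :
    1 - binomCdf n p (S - 1) ≤ Real.exp (-(t * S) + n * t * p + n * t ^ 2 / 8) := by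
  have hq : (0:ℝ) ≤ 1 - p := by linarith
  have htotal : ∑ k ∈ Finset.range (n + 1), (n.choose k : ℝ) * p ^ k * (1 - p) ^ (n - k) = 1 := by
    rw [binom_sum_eq]
    simp
  have hsplit : binomCdf n p (S - 1)
      + ∑ k ∈ Finset.Ico S (n + 1), (n.choose k : ℝ) * p ^ k * (1 - p) ^ (n - k)
      = ∑ k ∈ Finset.range (n + 1), (n.choose k : ℝ) * p ^ k * (1 - p) ^ (n - k) := by
    rw [binomCdf]
    have hS' : S - 1 + 1 = S := by omega
    rw [hS', Finset.range_eq_Ico, Finset.range_eq_Ico]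
    exact Finset.sum_Ico_consecutive _ (by omega) (by omega)
  have htail : 1 - binomCdf n p (S - 1)
      = ∑ k ∈ Finset.Ico S (n + 1), (n.choose k : ℝ) * p ^ k * (1 - p) ^ (n - k) := by
    have := hsplit.trans htotal
    linarith
  rw [htail]
  have step1 : ∑ k ∈ Finset.Ico S (n + 1), (n.choose k : ℝ) * p ^ k * (1 - p) ^ (n - k)
      ≤ Real.exp (-(t * S)) *
        ∑ k ∈ Finset.range (n + 1), (n.choose k : ℝ) * (p * Real.exp t) ^ k * (1 - p) ^ (n - k) := by
    rw [Finset.mul_sum]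
    calc ∑ k ∈ Finset.Ico S (n + 1), (n.choose k : ℝ) * p ^ k * (1 - p) ^ (n - k)
        ≤ ∑ k ∈ Finset.Ico S (n + 1),
            Real.exp (-(t * S)) * ((n.choose k : ℝ) * (p * Real.exp t) ^ k * (1 - p) ^ (n - k)) := by
          apply Finset.sum_le_sum
          intro k hk
          have hkS : S ≤ k := (Finset.mem_Ico.mp hk).1
          have hterm : (0:ℝ) ≤ (n.choose k : ℝ) * p ^ k * (1 - p) ^ (n - k) := by positivity
          have hrw : Real.exp (-(t * S)) * ((n.choose k : ℝ) * (p * Real.exp t) ^ k * (1 - p) ^ (n - k))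
              = Real.exp (-(t * S) + k * t) * ((n.choose k : ℝ) * p ^ k * (1 - p) ^ (n - k)) := by
            rw [mul_pow, ← Real.exp_nat_mul, Real.exp_add]
            ring
          rw [hrw]
          have h1 : (1:ℝ) ≤ Real.exp (-(t * S) + k * t) := by
            apply Real.one_le_exp
            have : (S:ℝ) ≤ k := by exact_mod_cast hkS
            nlinarith
          nlinarith [mul_le_mul_of_nonneg_right h1 hterm]
      _ ≤ ∑ k ∈ Finset.range (n + 1),
            Real.exp (-(t * S)) * ((n.choose k : ℝ) * (p * Real.exp t) ^ k * (1 - p) ^ (n - k)) := by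
          apply Finset.sum_le_sum_of_subset_of_nonneg
          · rw [Finset.range_eq_Ico]
            exact Finset.Ico_subset_Ico (by omega) le_rfl
          · intro k _ _
            positivity
  have step2 : ∑ k ∈ Finset.range (n + 1), (n.choose k : ℝ) * (p * Real.exp t) ^ k * (1 - p) ^ (n - k)
      = (p * Real.exp t + (1 - p)) ^ n := binom_sum_eq n _ _
  have step3 : (p * Real.exp t + (1 - p)) ^ n ≤ Real.exp (p * t + t ^ 2 / 8) ^ n := by
    apply pow_le_pow_left₀ (by positivity)
    have := hoeff_lemma p hp0 hp1 t
    linarith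
  calc ∑ k ∈ Finset.Ico S (n + 1), (n.choose k : ℝ) * p ^ k * (1 - p) ^ (n - k)
      ≤ Real.exp (-(t * S)) * (p * Real.exp t + (1 - p)) ^ n := by
        rw [← step2]; exact step1
    _ ≤ Real.exp (-(t * S)) * Real.exp (p * t + t ^ 2 / 8) ^ n := by
        apply mul_le_mul_of_nonneg_left step3 (Real.exp_pos _).le
    _ = Real.exp (-(t * S) + n * t * p + n * t ^ 2 / 8) := by
        rw [← Real.exp_nat_mul, ← Real.exp_add]
        congr 1
        ring

/-- Length of the two-sided Clopper–Pearson interval with coverage 1 - ρ. -/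
theorem stmt5 (n S : ℕ) (hn : 1 ≤ n) (hS : S ≤ n) (ρ : ℝ) (hρ0 : 0 < ρ) (hρ1 : ρ < 1)
    (pl pu : ℝ) (hpl0 : 0 ≤ pl) (hpu1 : pu ≤ 1) (hlu : pl ≤ pu)
    -- upper limit: solves P(X ≤ S | p = pu) = ρ, or pu = 1 if S = n
    (hpu : (S < n → binomCdf n pu S = ρ) ∧ (S = n → pu = 1))
    -- lower limit: solves P(X ≥ S | p = pl) = ρ, or pl = 0 if S = 0
    (hplow : (0 < S → 1 - binomCdf n pl (S - 1) = ρ) ∧ (S = 0 → pl = 0)) :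
    pu - pl ≤ 2 * (2 * n : ℝ) ^ (-(1:ℝ)/2) * Real.sqrt (-Real.log ρ) := by
  have hn' : (0:ℝ) < n := by exact_mod_cast hn
  have hlog : 0 < -Real.log ρ := by
    have := Real.log_neg hρ0 hρ1
    linarith
  set a : ℝ := (S : ℝ) / n with ha_def
  set ε : ℝ := Real.sqrt (-Real.log ρ / (2 * n)) with hε_def
  have hε0 : 0 ≤ ε := Real.sqrt_nonneg _
  have hε2 : ε ^ 2 = -Real.log ρ / (2 * n) := Real.sq_sqrt (by positivity)
  have hSa : (S : ℝ) = n * a := by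
    rw [ha_def]; field_simp
  -- upper bound
  have hU : pu ≤ a + ε := by
    rcases lt_or_eq_of_le hS with hlt | heq
    · by_contra hcon
      push_neg at hcon
      have hd : ε < pu - a := by linarith
      have hd0 : 0 < pu - a := by linarith
      have hcdf := hpu.1 hlt
      have hpu0 : 0 ≤ pu := le_trans hpl0 hlu
      have hb := cdf_le n S hS pu hpu0 hpu1 (4 * (pu - a)) (by linarith)
      rw [hcdf] at hb
      have hexp : 4 * (pu - a) * S - n * (4 * (pu - a)) * pu + n * (4 * (pu - a)) ^ 2 / 8
          = -(2 * n * (pu - a) ^ 2) := by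
        rw [hSa]; ring
      rw [hexp] at hb
      have hlogle : Real.log ρ ≤ -(2 * n * (pu - a) ^ 2) :=
        (Real.log_le_iff_le_exp hρ0).2 hb
      have hsq : ε ^ 2 < (pu - a) ^ 2 := by
        apply pow_lt_pow_left₀ hd hε0
        norm_num
      rw [hε2] at hsq
      have : -Real.log ρ < 2 * n * (pu - a) ^ 2 := by
        rw [div_lt_iff₀ (by positivity)] at hsq
        linarith [hsq]
      linarith
    · have h1 : pu = 1 := hpu.2 heq
      have : a = 1 := by
        rw [ha_def, heq]
        field_simp
      rw [h1, this]
      linarith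
  -- lower bound
  have hL : a - ε ≤ pl := by
    rcases Nat.eq_zero_or_pos S with h0 | hpos
    · have : pl = 0 := hplow.2 h0
      rw [this, ha_def, h0]
      simp
      positivity
    · by_contra hcon
      push_neg at hcon
      have hd : ε < a - pl := by linarith
      have hd0 : 0 < a - pl := by linarith
      have htl := hplow.1 hpos
      have hpl1 : pl ≤ 1 := le_trans hlu hpu1
      have hb := tail_le n S hpos hS pl hpl0 hpl1 (4 * (a - pl)) (by linarith)
      rw [htl] at hb
      have hexp : -(4 * (a - pl) * S) + n * (4 * (a - pl)) * pl + n * (4 * (a - pl)) ^ 2 / 8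
          = -(2 * n * (a - pl) ^ 2) := by
        rw [hSa]; ring
      rw [hexp] at hb
      have hlogle : Real.log ρ ≤ -(2 * n * (a - pl) ^ 2) :=
        (Real.log_le_iff_le_exp hρ0).2 hb
      have hsq : ε ^ 2 < (a - pl) ^ 2 := by
        apply pow_lt_pow_left₀ hd hε0
        norm_num
      rw [hε2] at hsq
      have : -Real.log ρ < 2 * n * (a - pl) ^ 2 := by
        rw [div_lt_iff₀ (by positivity)] at hsq
        linarith [hsq]
      linarith
  -- combine
  have hrw : (2 * n : ℝ) ^ (-(1:ℝ)/2) = (Real.sqrt (2 * n))⁻¹ := by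
    rw [show (-(1:ℝ)/2) = -(1/2) by ring, Real.rpow_neg (by positivity), Real.sqrt_eq_rpow]
  have hεeq : ε = Real.sqrt (-Real.log ρ) / Real.sqrt (2 * n) := by
    rw [hε_def, Real.sqrt_div hlog.le]
  have h2 : 2 * (2 * n : ℝ) ^ (-(1:ℝ)/2) * Real.sqrt (-Real.log ρ) = 2 * ε := by
    rw [hrw, hεeq]
    ring
  rw [h2]
  linarith
end
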